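/- For every integer d ≥ 2, let H_d be the hypercube graph: its vertex set is {0,1}^d and two vertices are adjacent if and only if they differ in exactly one coordinate, so H_d has n = 2^d vertices and d·2^{d−1} = (1/2)·n·log₂ n edges. Then there exists an injective embedding p of the vertices of H_d in ℝ² such that no three vertices of H_d are mapped by p to a common line, and for every subset S of the vertices with |S| ≥ 3, the framework (H_d[S], p|_S) is not rigid. -/

import Mathlib

/-- Points of the plane `ℝ²` with the Euclidean norm. -/
abbrev Pt := EuclideanSpace ℝ (Fin 2)

/-- Two frameworks `(G, p)` and `(G, q)` are equivalent if corresponding edge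
lengths agree. -/
def FrameworkEquiv {V : Type*} (G : SimpleGraph V) (p q : V → Pt) : Prop :=
  ∀ i j, G.Adj i j → dist (p i) (p j) = dist (q i) (q j)

/-- Two embeddings `p, q : V → ℝ²` are congruent if all pairwise distances agree. -/
def FrameworkCongruent {V : Type*} (p q : V → Pt) : Prop :=
  ∀ i j, dist (p i) (p j) = dist (q i) (q j)

/-- A framework `(G, p)` is rigid if there is a neighborhood `B` of `p` in `(ℝ²)^V`
such that every `p' ∈ B` with `(G, p')` equivalent to `(G, p)` is congruent to `(G, p)`. -/
def Rigid {V : Type*} (G : SimpleGraph V) (p : V → Pt) : Prop :=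
  ∃ B ∈ nhds p, ∀ q ∈ B, FrameworkEquiv G p q → FrameworkCongruent p q

/-- The hypercube graph `H_d`: vertices are `{0,1}^d` and two vertices are adjacent
iff they differ in exactly one coordinate. -/
def hypercube (d : ℕ) : SimpleGraph (Fin d → Bool) where
  Adj u v := ∃ i, u i ≠ v i ∧ ∀ j, j ≠ i → u j = v j
  symm := by
    constructor
    rintro u v ⟨i, hi, hj⟩
    exact ⟨i, hi.symm, fun j hj' => (hj j hj').symm⟩
  loopless := by
    constructor
    rintro u ⟨i, hi, -⟩
    exact hi rfl

namespace HCaux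

/-! ### Integer base-`B` expansion lemmas -/

lemma bound_fin (B : ℤ) (hB : 1 ≤ B) : ∀ (n : ℕ) (c : Fin n → ℤ), (∀ j, |c j| ≤ B - 1) →
    |∑ j, c j * B ^ (j : ℕ)| ≤ B ^ n - 1 := by
  intro n
  induction n with
  | zero => intro c _; simp
  | succ n ih =>
    intro c hc
    rw [Fin.sum_univ_castSucc]
    have h1 := ih (fun j => c j.castSucc) (fun j => hc _)
    have hBn : (0:ℤ) < B ^ n := pow_pos (by linarith) n
    have h2 : |c (Fin.last n) * B ^ n| ≤ (B - 1) * B ^ n := by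
      rw [abs_mul, abs_pow, abs_of_nonneg (by linarith : (0:ℤ) ≤ B)]
      exact mul_le_mul_of_nonneg_right (hc _) (le_of_lt hBn)
    calc |(∑ j : Fin n, c j.castSucc * B ^ (j:ℕ)) + c (Fin.last n) * B ^ n|
        ≤ |∑ j : Fin n, c j.castSucc * B ^ (j:ℕ)| + |c (Fin.last n) * B ^ n| := abs_add_le _ _
      _ ≤ (B ^ n - 1) + (B - 1) * B ^ n := by exact add_le_add h1 h2
      _ = B ^ (n+1) - 1 := by ring

lemma dom_fin (B : ℤ) (hB : 2 ≤ B) : ∀ (n : ℕ) (c : Fin n → ℤ), (∀ j, |c j| ≤ B - 1) →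
    (∃ j, c j ≠ 0) → (∑ j, c j * B ^ (j : ℕ)) ≠ 0 := by
  intro n
  induction n with
  | zero => rintro c _ ⟨j, _⟩; exact j.elim0
  | succ n ih =>
    rintro c hc ⟨j, hj⟩
    rw [Fin.sum_univ_castSucc]
    by_cases hl : c (Fin.last n) = 0
    · rw [hl, zero_mul, add_zero]
      refine ih (fun j => c j.castSucc) (fun j => hc _) ?_
      have hjne : j ≠ Fin.last n := fun h => hj (h ▸ hl)
      obtain ⟨j', rfl⟩ := Fin.exists_castSucc_eq.mpr hjne
      exact ⟨j', hj⟩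
    · intro h0
      simp only [Fin.coe_castSucc, Fin.val_last] at h0
      have h1 : |∑ j : Fin n, c j.castSucc * B ^ (j:ℕ)| ≤ B ^ n - 1 :=
        bound_fin B (by linarith) n _ (fun j => hc _)
      have hBn : (0:ℤ) < B ^ n := pow_pos (by linarith) n
      have h2 : B ^ n ≤ |c (Fin.last n) * B ^ n| := by
        rw [abs_mul, abs_pow, abs_of_nonneg (by linarith : (0:ℤ) ≤ B)]
        nlinarith [Int.one_le_abs hl]
      have h3 : c (Fin.last n) * B ^ n = -∑ j : Fin n, c j.castSucc * B ^ (j:ℕ) := by linarith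
      rw [h3, abs_neg] at h2
      linarith

lemma det_ne (d : ℕ) (c c' : Fin d → ℤ) (hc : ∀ j, |c j| ≤ 1) (hc' : ∀ j, |c' j| ≤ 1)
    (hind : ∃ j k, c j * c' k ≠ c k * c' j) :
    (∑ j, c j * 3 ^ (j:ℕ)) * (∑ k, c' k * 3 ^ ((d+1)*((k:ℕ)+1))) -
    (∑ j, c j * 3 ^ ((d+1)*((j:ℕ)+1))) * (∑ k, c' k * 3 ^ (k:ℕ)) ≠ 0 := by
  have hB : (2:ℤ) ≤ 3 ^ (d+1) := by
    calc (2:ℤ) ≤ 3^1 := by norm_num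
    _ ≤ 3^(d+1) := pow_le_pow_right₀ (by norm_num) (by omega)
  set g : Fin d → ℤ := fun k => ∑ j, (c j * c' k - c k * c' j) * 3 ^ (j:ℕ) with hg
  have hβ : ∀ k : Fin d, (3:ℤ) ^ ((d+1)*((k:ℕ)+1)) = 3^(d+1) * ((3:ℤ)^(d+1)) ^ (k:ℕ) := by
    intro k
    rw [← pow_mul, ← pow_add]
    congr 1
    ring
  have h1 : (∑ j, c j * 3 ^ (j:ℕ)) * (∑ k, c' k * 3 ^ ((d+1)*((k:ℕ)+1)))
      = ∑ k, ∑ j, c j * c' k * 3 ^ (j:ℕ) * 3 ^ ((d+1)*((k:ℕ)+1)) := by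
    rw [Finset.sum_mul_sum, Finset.sum_comm]
    exact Finset.sum_congr rfl fun k _ => Finset.sum_congr rfl fun j _ => by ring
  have h2 : (∑ j, c j * 3 ^ ((d+1)*((j:ℕ)+1))) * (∑ k, c' k * 3 ^ (k:ℕ))
      = ∑ k, ∑ j, c k * c' j * 3 ^ (j:ℕ) * 3 ^ ((d+1)*((k:ℕ)+1)) := by
    rw [Finset.sum_mul_sum]
    exact Finset.sum_congr rfl fun k _ => Finset.sum_congr rfl fun j _ => by ring
  have key : (∑ j, c j * 3 ^ (j:ℕ)) * (∑ k, c' k * 3 ^ ((d+1)*((k:ℕ)+1))) -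
      (∑ j, c j * 3 ^ ((d+1)*((j:ℕ)+1))) * (∑ k, c' k * 3 ^ (k:ℕ))
      = 3^(d+1) * ∑ k, g k * ((3:ℤ)^(d+1)) ^ (k:ℕ) := by
    rw [h1, h2, ← Finset.sum_sub_distrib, Finset.mul_sum, hg]
    refine Finset.sum_congr rfl (fun k _ => ?_)
    rw [← Finset.sum_sub_distrib]
    simp only []
    rw [Finset.sum_mul, Finset.mul_sum]
    refine Finset.sum_congr rfl (fun j _ => ?_)
    rw [hβ k]
    ring
  rw [key]
  refine mul_ne_zero (by positivity) ?_
  refine dom_fin _ hB d g ?_ ?_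
  · intro k
    have h1 : |g k| ≤ 3^d - 1 := by
      refine bound_fin 3 (by norm_num) d _ (fun j => ?_)
      calc |c j * c' k - c k * c' j| ≤ |c j * c' k| + |c k * c' j| := abs_sub _ _
        _ ≤ 1 * 1 + 1 * 1 := by
            rw [abs_mul, abs_mul]
            gcongr <;> first | exact hc _ | exact hc' _
        _ ≤ 3 - 1 := by norm_num
    have : (3:ℤ)^d ≤ 3^(d+1) := pow_le_pow_right₀ (by norm_num) (by omega)
    linarith
  · obtain ⟨j, k, hjk⟩ := hind
    refine ⟨k, ?_⟩
    refine dom_fin 3 (by norm_num) d _ (fun j' => ?_) ⟨j, sub_ne_zero_of_ne hjk⟩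
    calc |c j' * c' k - c k * c' j'| ≤ |c j' * c' k| + |c k * c' j'| := abs_sub _ _
      _ ≤ 1 * 1 + 1 * 1 := by
          rw [abs_mul, abs_mul]
          gcongr <;> first | exact hc _ | exact hc' _
      _ ≤ 3 - 1 := by norm_num

/-! ### Combinatorial lemma on difference vectors of three distinct cube vertices -/

lemma indep_of_triple {d : ℕ} (u v w : Fin d → Bool) (huv : u ≠ v) (hvw : v ≠ w) (huw : u ≠ w) :
    ∃ j k, (((v j).toNat : ℤ) - (u j).toNat) * (((w k).toNat : ℤ) - (u k).toNat)
      ≠ (((v k).toNat : ℤ) - (u k).toNat) * (((w j).toNat : ℤ) - (u j).toNat) := by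
  set c : Fin d → ℤ := fun j => ((v j).toNat : ℤ) - (u j).toNat with hc
  set c' : Fin d → ℤ := fun j => ((w j).toNat : ℤ) - (u j).toNat with hc'
  by_contra h
  push_neg at h
  obtain ⟨j₀, hj₀⟩ : ∃ a, u a ≠ v a := Function.ne_iff.mp huv
  have hcj₀ : c j₀ * c j₀ = 1 := by
    simp only [hc]
    cases hu : u j₀ <;> cases hv : v j₀ <;> simp_all
  have hall : ∀ k, c' k = c k * (c' j₀ * c j₀) := by
    intro k
    have h1 : c' k * (c j₀ * c j₀) = (c k * c' j₀) * c j₀ := by rw [← h j₀ k]; ring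
    rw [hcj₀, mul_one] at h1
    rw [h1]; ring
  have hlam : c' j₀ * c j₀ = -1 ∨ c' j₀ * c j₀ = 0 ∨ c' j₀ * c j₀ = 1 := by
    have h1 : |c' j₀| ≤ 1 := by simp only [hc']; cases (w j₀) <;> cases (u j₀) <;> simp
    have h2 : |c j₀| ≤ 1 := by simp only [hc]; cases (v j₀) <;> cases (u j₀) <;> simp
    have h3 : |c' j₀ * c j₀| ≤ 1 := by
      rw [abs_mul]
      nlinarith [abs_nonneg (c' j₀), abs_nonneg (c j₀)]
    rw [abs_le] at h3
    omega
  rcases hlam with hl | hl | hl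
  · apply huv
    funext k
    have h1 := hall k
    rw [hl] at h1
    simp only [hc, hc'] at h1
    clear hall
    cases hu : u k <;> cases hv : v k <;> cases hw : w k <;> simp_all <;> omega
  · apply huw
    funext k
    have h1 := hall k
    rw [hl] at h1
    simp only [hc, hc'] at h1
    clear hall
    cases hu : u k <;> cases hw : w k <;> simp_all <;> omega
  · apply hvw
    funext k
    have h1 := hall k
    rw [hl] at h1
    simp only [hc, hc'] at h1
    clear hall
    cases hv : v k <;> cases hw : w k <;> simp_all <;> omega

/-! ### A small nonzero flex parameter exists -/

lemma flex_t (A B δ : ℝ) (hδ : 0 < δ) (hAB : A ≠ 0 ∨ B ≠ 0) :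
    ∃ t : ℝ, 0 < t ∧ t < δ ∧ (Real.cos t - 1) * A + Real.sin t * B ≠ 0 := by
  by_cases hB : B = 0
  · have hA : A ≠ 0 := hAB.resolve_right (by simp [hB])
    refine ⟨min δ 1 / 2, by positivity, ?_, ?_⟩
    · have : min δ 1 ≤ δ := min_le_left _ _
      linarith
    · have ht0 : 0 < min δ 1 / 2 := by positivity
      have ht1 : min δ 1 / 2 ≤ 1 / 2 := by
        have : min δ 1 ≤ 1 := min_le_right _ _
        linarith
      have hpi := Real.pi_gt_three
      have hne : Real.cos (min δ 1 / 2) ≠ 1 := by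
        rw [Ne, Real.cos_eq_one_iff_of_lt_of_lt (by nlinarith) (by nlinarith)]
        exact ne_of_gt ht0
      simp only [hB, mul_zero, add_zero]
      exact mul_ne_zero (sub_ne_zero_of_ne hne) hA
  · set t : ℝ := min δ (min 1 (|B| / (|A| + 1))) / 2 with hts
    have hBpos : 0 < |B| := abs_pos.mpr hB
    have hApos : 0 < |A| + 1 := by positivity
    have ht0 : 0 < t := by positivity
    have htδ : t < δ := by
      have : min δ (min 1 (|B| / (|A| + 1))) ≤ δ := min_le_left _ _
      linarith
    have ht1 : t ≤ 1 / 2 := by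
      have h1 : min δ (min 1 (|B| / (|A| + 1))) ≤ 1 := (min_le_right _ _).trans (min_le_left _ _)
      linarith
    have htB : t ≤ |B| / (|A| + 1) / 2 := by
      have h1 : min δ (min 1 (|B| / (|A| + 1))) ≤ |B| / (|A| + 1) :=
        (min_le_right _ _).trans (min_le_right _ _)
      linarith
    refine ⟨t, ht0, htδ, ?_⟩
    have hsin : t / 2 < Real.sin t := by
      have h5 := Real.sin_gt_sub_cube ht0
      have ht2 : t ^ 2 ≤ (1/2) ^ 2 := by nlinarith
      have h4 : t ^ 3 ≤ t * (1/4) := by nlinarith [mul_le_mul_of_nonneg_left ht2 ht0.le]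
      linarith
    have hcos : 1 - Real.cos t < t ^ 2 / 2 := by
      have := Real.one_sub_sq_div_two_lt_cos (ne_of_gt ht0)
      linarith
    have hcos' : Real.cos t ≤ 1 := Real.cos_le_one t
    have hkey : |(Real.cos t - 1) * A| < |Real.sin t * B| := by
      rw [abs_mul, abs_mul]
      have h1 : |Real.cos t - 1| = 1 - Real.cos t := by
        rw [abs_sub_comm, abs_of_nonneg (by linarith)]
      rw [h1]
      have h2 : |Real.sin t| = Real.sin t := abs_of_pos (by linarith)
      rw [h2]
      have h3 : t * |A| < |B| := by
        have : t * (|A| + 1) ≤ |B| / 2 := by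
          rw [div_div] at htB
          calc t * (|A| + 1) ≤ (|B| / ((|A| + 1) * 2)) * (|A| + 1) := by
                exact mul_le_mul_of_nonneg_right htB (le_of_lt hApos)
            _ = |B| / 2 := by field_simp
        nlinarith
      calc (1 - Real.cos t) * |A| ≤ t ^ 2 / 2 * |A| := by
            apply mul_le_mul_of_nonneg_right (le_of_lt hcos) (abs_nonneg A)
        _ < Real.sin t * |B| := by nlinarith [abs_nonneg A, abs_nonneg B]
    intro hzero
    have heq : Real.sin t * B = -((Real.cos t - 1) * A) := by linarith
    rw [← abs_neg (Real.sin t * B)] at hkey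
    rw [heq] at hkey
    simp at hkey

/-! ### Points of the plane -/

noncomputable def mk2 (a b : ℝ) : Pt := (WithLp.equiv 2 (Fin 2 → ℝ)).symm ![a, b]

lemma dist_mk2 (a b c e : ℝ) :
    dist (mk2 a b) (mk2 c e) = Real.sqrt ((a - c) ^ 2 + (b - e) ^ 2) := by
  rw [EuclideanSpace.dist_eq]
  congr 1
  rw [Fin.sum_univ_two]
  simp [mk2, Real.dist_eq, sq_abs]

lemma mk2_inj {a b c e : ℝ} (h : mk2 a b = mk2 c e) : a = c ∧ b = e :=
  ⟨congrFun (congrArg (WithLp.equiv 2 (Fin 2 → ℝ)) h) 0,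
   congrFun (congrArg (WithLp.equiv 2 (Fin 2 → ℝ)) h) 1⟩

lemma continuous_mk2 {f g : ℝ → ℝ} (hf : Continuous f) (hg : Continuous g) :
    Continuous (fun t => mk2 (f t) (g t)) := by
  apply Continuous.comp (PiLp.continuous_toLp 2 (fun _ : Fin 2 => ℝ))
  apply continuous_pi
  intro i
  fin_cases i
  · simpa using hf
  · simpa using hg

lemma smul_vadd_components (r : ℝ) (v x : Pt) (k : Fin 2) : (r • v +ᵥ x) k = r * v k + x k := rfl

/-! ### The algebraic identity for the flex -/

lemma alg (s0a s0b s1a s1b ta tb X Y ct st : ℝ) (pyth : st ^ 2 + ct ^ 2 = 1)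
    (h2 : (s0a + ta * X - (s0b + tb * X)) ^ 2 + (s1a + ta * Y - (s1b + tb * Y)) ^ 2
        = (s0a + ta * (ct * X - st * Y) - (s0b + tb * (ct * X - st * Y))) ^ 2
          + (s1a + ta * (st * X + ct * Y) - (s1b + tb * (st * X + ct * Y))) ^ 2) :
    (ta - tb) * ((ct - 1) * ((s0a - s0b) * X + (s1a - s1b) * Y)
      + st * ((s1a - s1b) * X - (s0a - s0b) * Y)) = 0 := by
  linear_combination (-1/2) * h2 - (ta - tb)^2 * (X^2 + Y^2) / 2 * pyth

end HCaux

set_option maxHeartbeats 2000000 in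
theorem hypercube_embedding_no_rigid_part :
    ∀ d : ℕ, 2 ≤ d →
      ∃ p : (Fin d → Bool) → Pt,
        Function.Injective p ∧
        (∀ u v w : Fin d → Bool, u ≠ v → v ≠ w → u ≠ w →
          ¬ Collinear ℝ ({p u, p v, p w} : Set Pt)) ∧
        ∀ S : Set (Fin d → Bool), 3 ≤ S.ncard →
          ¬ Rigid ((hypercube d).induce S) (fun i : S => p i.1) := by
  intro d _hd
  classical
  set x : Fin d → ℝ := fun j => (3:ℝ) ^ (j:ℕ) with hx
  set y : Fin d → ℝ := fun j => (3:ℝ) ^ ((d+1) * ((j:ℕ)+1)) with hy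
  set p : (Fin d → Bool) → Pt := fun u =>
    HCaux.mk2 (∑ j, ((u j).toNat : ℝ) * x j) (∑ j, ((u j).toNat : ℝ) * y j) with hp
  -- real nonvanishing of {-1,0,1}-combinations of the x's
  have hlin : ∀ (c : Fin d → ℤ), (∀ j, |c j| ≤ 1) → (∃ j, c j ≠ 0) →
      (∑ j, (c j : ℝ) * x j) ≠ 0 := by
    intro c hb hne h0
    apply HCaux.dom_fin 3 (by norm_num) d c (fun j => (hb j).trans (by norm_num)) hne
    have hcast : ((∑ j, c j * 3 ^ (j:ℕ) : ℤ) : ℝ) = ∑ j, (c j : ℝ) * x j := by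
      push_cast
      simp [hx]
    exact_mod_cast hcast ▸ h0
  refine ⟨p, ?_, ?_, ?_⟩
  · -- injectivity
    intro u w huw
    by_contra hne
    obtain ⟨j₀, hj₀⟩ := Function.ne_iff.mp hne
    have h1 := (HCaux.mk2_inj huw).1
    refine hlin (fun j => ((u j).toNat : ℤ) - (w j).toNat)
      (fun j => by cases hu : u j <;> cases hw : w j <;> simp [hu, hw])
      ⟨j₀, by cases hu : u j₀ <;> cases hw : w j₀ <;> simp_all⟩ ?_
    push_cast
    simp only [sub_mul, Finset.sum_sub_distrib]
    rw [h1]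
    ring
  · -- no three collinear
    intro u v w huv hvw huw hcol
    set c : Fin d → ℤ := fun j => ((v j).toNat : ℤ) - (u j).toNat with hc
    set c' : Fin d → ℤ := fun j => ((w j).toNat : ℤ) - (u j).toNat with hc'
    have hdet := HCaux.det_ne d c c'
      (fun j => by simp only [hc]; cases hv : v j <;> cases hu : u j <;> simp [hv, hu])
      (fun j => by simp only [hc']; cases hw : w j <;> cases hu : u j <;> simp [hw, hu])
      (HCaux.indep_of_triple u v w huv hvw huw)
    rw [collinear_iff_of_mem (Set.mem_insert (p u) _)] at hcol
    obtain ⟨dir, hdir⟩ := hcol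
    obtain ⟨r1, hr1⟩ := hdir (p v) (by simp)
    obtain ⟨r2, hr2⟩ := hdir (p w) (by simp)
    -- components
    have e1 : ∑ j, (c j : ℝ) * x j = r1 * dir 0 := by
      have := congrFun (congrArg (WithLp.equiv 2 (Fin 2 → ℝ)) hr1) 0
      have hv0 : (p v) 0 = ∑ j, ((v j).toNat : ℝ) * x j := rfl
      have hu0 : (p u) 0 = ∑ j, ((u j).toNat : ℝ) * x j := rfl
      have h2 : (p v) 0 = r1 * dir 0 + (p u) 0 := this
      rw [hv0, hu0] at h2
      push_cast [hc]
      simp only [sub_mul, Finset.sum_sub_distrib]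
      linarith
    have e2 : ∑ j, (c j : ℝ) * y j = r1 * dir 1 := by
      have h2 : (p v) 1 = r1 * dir 1 + (p u) 1 :=
        congrFun (congrArg (WithLp.equiv 2 (Fin 2 → ℝ)) hr1) 1
      have hv0 : (p v) 1 = ∑ j, ((v j).toNat : ℝ) * y j := rfl
      have hu0 : (p u) 1 = ∑ j, ((u j).toNat : ℝ) * y j := rfl
      rw [hv0, hu0] at h2
      push_cast [hc]
      simp only [sub_mul, Finset.sum_sub_distrib]
      linarith
    have e3 : ∑ j, (c' j : ℝ) * x j = r2 * dir 0 := by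
      have h2 : (p w) 0 = r2 * dir 0 + (p u) 0 :=
        congrFun (congrArg (WithLp.equiv 2 (Fin 2 → ℝ)) hr2) 0
      have hv0 : (p w) 0 = ∑ j, ((w j).toNat : ℝ) * x j := rfl
      have hu0 : (p u) 0 = ∑ j, ((u j).toNat : ℝ) * x j := rfl
      rw [hv0, hu0] at h2
      push_cast [hc']
      simp only [sub_mul, Finset.sum_sub_distrib]
      linarith
    have e4 : ∑ j, (c' j : ℝ) * y j = r2 * dir 1 := by
      have h2 : (p w) 1 = r2 * dir 1 + (p u) 1 :=
        congrFun (congrArg (WithLp.equiv 2 (Fin 2 → ℝ)) hr2) 1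
      have hv0 : (p w) 1 = ∑ j, ((w j).toNat : ℝ) * y j := rfl
      have hu0 : (p u) 1 = ∑ j, ((u j).toNat : ℝ) * y j := rfl
      rw [hv0, hu0] at h2
      push_cast [hc']
      simp only [sub_mul, Finset.sum_sub_distrib]
      linarith
    apply hdet
    have hzero : (∑ j, (c j : ℝ) * x j) * (∑ k, (c' k : ℝ) * y k)
        - (∑ j, (c j : ℝ) * y j) * (∑ k, (c' k : ℝ) * x k) = 0 := by
      rw [e1, e2, e3, e4]; ring
    have hcast : (((∑ j, c j * 3 ^ (j:ℕ)) * (∑ k, c' k * 3 ^ ((d+1)*((k:ℕ)+1))) -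
        (∑ j, c j * 3 ^ ((d+1)*((j:ℕ)+1))) * (∑ k, c' k * 3 ^ (k:ℕ)) : ℤ) : ℝ)
        = (∑ j, (c j : ℝ) * x j) * (∑ k, (c' k : ℝ) * y k)
          - (∑ j, (c j : ℝ) * y j) * (∑ k, (c' k : ℝ) * x k) := by
      push_cast
      simp [hx, hy]
    exact_mod_cast hcast ▸ hzero
  · -- every subframework on ≥ 3 vertices is flexible
    intro S hS hrig
    have hfin : S.Finite := S.toFinite
    rw [Set.ncard_eq_toFinset_card S hfin] at hS
    obtain ⟨u, v, w, hu, hv, hw, huv, huw, hvw⟩ := Finset.two_lt_card_iff.mp hS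
    rw [Set.Finite.mem_toFinset] at hu hv hw
    -- a pair in S differing in at least two coordinates
    have hpair : ∃ a ∈ S, ∃ b ∈ S, ∃ i j : Fin d, i ≠ j ∧ a i ≠ b i ∧ a j ≠ b j := by
      by_contra hcon
      push_neg at hcon
      obtain ⟨iuv, hiuv⟩ := Function.ne_iff.mp huv
      obtain ⟨iuw, hiuw⟩ := Function.ne_iff.mp huw
      by_cases hii : iuv = iuw
      · apply hvw
        funext k
        by_cases hk : k = iuv
        · subst hk
          rw [← hii] at hiuw
          cases hvk : v k <;> cases hwk : w k <;> cases huk : u k <;> simp_all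
        · have h1 : u k = v k := hcon u hu v hv iuv k (Ne.symm hk) hiuv
          have h2 : u k = w k := hcon u hu w hw iuw k (fun he => hk (hii.trans he).symm) hiuw
          rw [← h1, h2]
      · have h1 : u iuv = w iuv := hcon u hu w hw iuw iuv (Ne.symm hii) hiuw
        have h2 : u iuw = v iuw := hcon u hu v hv iuv iuw hii hiuv
        have h3 : v iuw = w iuw := hcon v hv w hw iuv iuw hii (fun he => hiuv (h1.trans he.symm))
        exact hiuw (h2 ▸ h3)
    obtain ⟨a, haS, b, hbS, i, j, hij, hai, haj⟩ := hpair
    -- flex setup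
    set X : ℝ := x i with hX
    set Y : ℝ := y i with hY
    set s0 : (Fin d → Bool) → ℝ := fun u => ∑ k ∈ Finset.univ.erase i, ((u k).toNat : ℝ) * x k
      with hs0
    set s1 : (Fin d → Bool) → ℝ := fun u => ∑ k ∈ Finset.univ.erase i, ((u k).toNat : ℝ) * y k
      with hs1
    set q : ℝ → (Fin d → Bool) → Pt := fun θ u =>
      HCaux.mk2 (s0 u + ((u i).toNat : ℝ) * (Real.cos θ * X - Real.sin θ * Y))
        (s1 u + ((u i).toNat : ℝ) * (Real.sin θ * X + Real.cos θ * Y)) with hq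
    have hp_alt : ∀ u, p u = HCaux.mk2 (s0 u + ((u i).toNat : ℝ) * X)
        (s1 u + ((u i).toNat : ℝ) * Y) := by
      intro u
      simp only [hp, hs0, hs1, hX, hY]
      rw [← Finset.sum_erase_add Finset.univ (fun k => ((u k).toNat : ℝ) * x k)
        (Finset.mem_univ i), ← Finset.sum_erase_add Finset.univ
        (fun k => ((u k).toNat : ℝ) * y k) (Finset.mem_univ i)]
    have hq0 : ∀ u, q 0 u = p u := by
      intro u
      rw [hp_alt u]
      simp only [hq, Real.cos_zero, Real.sin_zero]
      norm_num
    -- equivalence of frameworks for every θ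
    have hEquiv : ∀ θ : ℝ, FrameworkEquiv ((hypercube d).induce S)
        (fun U : S => p U.1) (fun U : S => q θ U.1) := by
      intro θ U V hadj
      have hadj' : (hypercube d).Adj U.1 V.1 := hadj
      obtain ⟨j₀, hj₀, hoff⟩ := hadj'
      simp only
      rw [hp_alt U.1, hp_alt V.1, hq]
      simp only
      rw [HCaux.dist_mk2, HCaux.dist_mk2]
      by_cases hcase : j₀ = i
      · subst hcase
        have hs0' : s0 U.1 = s0 V.1 :=
          Finset.sum_congr rfl (fun k hk => by rw [hoff k (Finset.ne_of_mem_erase hk)])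
        have hs1' : s1 U.1 = s1 V.1 :=
          Finset.sum_congr rfl (fun k hk => by rw [hoff k (Finset.ne_of_mem_erase hk)])
        rw [hs0', hs1']
        congr 1
        have pyth := Real.sin_sq_add_cos_sq θ
        set ta : ℝ := ((U.1 j₀).toNat : ℝ)
        set tb : ℝ := ((V.1 j₀).toNat : ℝ)
        linear_combination -(ta - tb)^2 * (X^2 + Y^2) * pyth
      · have hti : U.1 i = V.1 i := hoff i (fun he => hcase he.symm)
        rw [hti]
        congr 1
        ring
    -- the pair (a, b) whose distance moves
    set C : Fin d → ℤ := fun k => if k = i then 0 else ((a k).toNat : ℤ) - (b k).toNat with hC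
    have hD0 : s0 a - s0 b ≠ 0 := by
      have e1 : ∑ k, (C k : ℝ) * x k = s0 a - s0 b := by
        rw [← Finset.sum_erase_add _ _ (Finset.mem_univ i)]
        simp only [hC, if_pos rfl, Int.cast_zero, zero_mul, add_zero, hs0, hs1]
        rw [← Finset.sum_sub_distrib]
        refine Finset.sum_congr rfl (fun k hk => ?_)
        rw [if_neg (Finset.ne_of_mem_erase hk)]
        push_cast
        ring
      rw [← e1]
      refine hlin C (fun k => ?_) ⟨j, ?_⟩
      · simp only [hC]
        split
        · simp
        · cases hak : a k <;> cases hbk : b k <;> simp [hak, hbk]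
      · simp only [hC, if_neg (Ne.symm hij)]
        cases hak : a j <;> cases hbk : b j
        · exact absurd (hak.trans hbk.symm) haj
        · norm_num [Bool.toNat_false, Bool.toNat_true]
        · norm_num [Bool.toNat_false, Bool.toNat_true]
        · exact absurd (hak.trans hbk.symm) haj
    have hXpos : (0:ℝ) < X := by rw [hX, hx]; positivity
    set D0 : ℝ := s0 a - s0 b with hD0def
    set D1 : ℝ := s1 a - s1 b with hD1def
    set A : ℝ := D0 * X + D1 * Y with hA
    set B : ℝ := D1 * X - D0 * Y with hB
    clear_value B A D1 D0 q s1 s0 Y X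
    have hAB : A ≠ 0 ∨ B ≠ 0 := by
      by_contra hcon
      push_neg at hcon
      have hid : A ^ 2 + B ^ 2 = (D0 ^ 2 + D1 ^ 2) * (X ^ 2 + Y ^ 2) := by
        rw [hA, hB]; ring
      have h1 : 0 < D0 ^ 2 := lt_of_le_of_ne (sq_nonneg D0) (Ne.symm (pow_ne_zero 2 hD0))
      have h2 : 0 < X ^ 2 := pow_pos hXpos 2
      rw [hcon.1, hcon.2] at hid
      norm_num at hid
      rcases hid with h | h
      · exact (ne_of_gt (add_pos_of_pos_of_nonneg h1 (sq_nonneg D1))) h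
      · exact (ne_of_gt (add_pos_of_pos_of_nonneg h2 (sq_nonneg Y))) h
    -- dismantle rigidity
    obtain ⟨Bset, hBn, hcong⟩ := hrig
    set F : ℝ → (S → Pt) := fun θ (U : S) => q θ U.1 with hF
    have hFc : Continuous F := by
      apply continuous_pi
      intro U
      simp only [hF, hq]
      exact HCaux.continuous_mk2 (by fun_prop) (by fun_prop)
    have hF0 : F 0 = (fun U : S => p U.1) := funext fun U => hq0 U.1
    have hT : F ⁻¹' Bset ∈ nhds (0:ℝ) :=
      hFc.continuousAt.preimage_mem_nhds (by rw [hF0]; exact hBn)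
    obtain ⟨δ, hδ, hball⟩ := Metric.mem_nhds_iff.mp hT
    obtain ⟨t, ht0, htδ, htne⟩ := HCaux.flex_t A B δ hδ hAB
    have hmem : F t ∈ Bset := hball (by
      simp only [Metric.mem_ball, Real.dist_eq, sub_zero]
      rw [abs_of_pos ht0]
      exact htδ)
    have hcg := hcong (F t) hmem (hEquiv t)
    have hdists := hcg ⟨a, haS⟩ ⟨b, hbS⟩
    simp only [hF] at hdists
    rw [hp_alt a, hp_alt b, hq] at hdists
    simp only at hdists
    rw [HCaux.dist_mk2, HCaux.dist_mk2] at hdists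
    have h2 := (Real.sqrt_inj (by positivity) (by positivity)).mp hdists
    have halg := HCaux.alg (s0 a) (s0 b) (s1 a) (s1 b) ((a i).toNat : ℝ) ((b i).toNat : ℝ)
      X Y (Real.cos t) (Real.sin t) (Real.sin_sq_add_cos_sq t) h2
    have hε : (((a i).toNat : ℝ) - ((b i).toNat : ℝ)) ≠ 0 := by
      cases hak : a i <;> cases hbk : b i
      · exact absurd (hak.trans hbk.symm) hai
      · norm_num [Bool.toNat_false, Bool.toNat_true]
      · norm_num [Bool.toNat_false, Bool.toNat_true]
      · exact absurd (hak.trans hbk.symm) hai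
    apply htne
    have := (mul_eq_zero.mp halg).resolve_left hε
    rw [hA, hB, hD0def, hD1def]
    linarith [this]
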